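/- Suppose two random variables M and Z given each m have output distributions p_{Z|M=m} all within total variation ε ≤ 1/2 of a common density f. Then for M taking at most e^{kR} values, the mutual information satisfies I(M; Z) ≤ 8εkR − 8ε log(8ε) (for 8ε < 1). -/

import Mathlib

open MeasureTheory

private lemma mul_log_sub {a b : ℝ} (ha : 0 ≤ a) (hb : 0 < b) :
    a * (Real.log b - Real.log a) ≤ b - a := by
  rcases eq_or_lt_of_le ha with h | h
  · simp [← h, hb.le]
  · have h1 : Real.log (b / a) ≤ b / a - 1 :=
      Real.log_le_sub_one_of_pos (by positivity)
    rw [Real.log_div hb.ne' h.ne'] at h1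
    have h2 := mul_le_mul_of_nonneg_left h1 ha
    have h3 : a * (b / a - 1) = b - a := by field_simp
    linarith [h2, h3.le]

private lemma neg_mul_log_le_tangent {x t : ℝ} (hx : 0 ≤ x) (ht : 0 < t) :
    -(x * Real.log x) ≤ x * (-Real.log t - 1) + t := by
  have h := mul_log_sub hx ht
  nlinarith [h]

private lemma mul_log_superadd {w d : ℝ} (hw : 0 ≤ w) (hd : 0 ≤ d) :
    w * Real.log w + d * Real.log d ≤ (w + d) * Real.log (w + d) := by
  have h1 : w * Real.log w ≤ w * Real.log (w + d) := by
    rcases eq_or_lt_of_le hw with h | h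
    · simp [← h]
    · exact mul_le_mul_of_nonneg_left (Real.log_le_log h (by linarith)) hw
  have h2 : d * Real.log d ≤ d * Real.log (w + d) := by
    rcases eq_or_lt_of_le hd with h | h
    · simp [← h]
    · exact mul_le_mul_of_nonneg_left (Real.log_le_log h (by linarith)) hd
  nlinarith [h1, h2]

private lemma up1 {a d : ℝ} (ha : 0 ≤ a) (hd : 0 ≤ d) (h1 : a + d ≤ 1) :
    (a + d) * Real.log (a + d) + (1 - d) * Real.log (1 - d) ≤ a * Real.log a := by
  rcases eq_or_lt_of_le (show a ≤ 1 by linarith) with h | hlt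
  · -- a = 1, d = 0
    have hd0 : d = 0 := by linarith
    simp [hd0]
  · set t : ℝ := d / (1 - a) with htdef
    have h1a : 0 < 1 - a := by linarith
    have ht0 : 0 ≤ t := by positivity
    have ht1 : t ≤ 1 := by
      rw [div_le_one h1a]; linarith
    have hconv := Real.convexOn_mul_log.2 (Set.mem_Ici.2 ha) (Set.mem_Ici.2 zero_le_one)
    have hA := hconv (a := 1 - t) (b := t) (by linarith) ht0 (by ring)
    have hB := hconv (a := t) (b := 1 - t) ht0 (by linarith) (by ring)
    have e1 : (1 - t) • a + t • (1 : ℝ) = a + d := by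
      simp only [smul_eq_mul, mul_one, htdef]; field_simp; ring
    have e2 : t • a + (1 - t) • (1 : ℝ) = 1 - d := by
      simp only [smul_eq_mul, mul_one, htdef]; field_simp; ring
    rw [e1] at hA
    rw [e2] at hB
    simp only [smul_eq_mul, Real.log_one, mul_zero] at hA hB
    nlinarith [hA, hB]


private lemma exp_one_lt_3 : Real.exp 1 < 3 := by
  have := Real.exp_one_lt_d9
  linarith

private lemma up2 {d : ℝ} (hd : 0 ≤ d) (hd2 : d ≤ 1/2) :
    d * Real.log d ≤ (1 - d) * Real.log (1 - d) := by
  rcases le_or_gt d (1/3) with h3 | h3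
  · -- small case: d * log d ≤ -d ≤ (1-d) log (1-d)
    have hA : d * Real.log d ≤ -d := by
      rcases eq_or_lt_of_le hd with h | h
      · simp [← h]
      · have hlog : Real.log d ≤ -1 := by
          have h1 : Real.log d ≤ Real.log (1/3) := Real.log_le_log h h3
          have h2 : Real.log (1/3) = -Real.log 3 := by
            rw [one_div, Real.log_inv]
          have h3' : 1 ≤ Real.log 3 :=
            (Real.le_log_iff_exp_le (by norm_num)).2 exp_one_lt_3.le
          linarith
        nlinarith [hlog, h]
    have hB : -d ≤ (1 - d) * Real.log (1 - d) := by
      have h1d : 0 < 1 - d := by linarith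
      have h1 : Real.log (1 / (1 - d)) ≤ 1 / (1 - d) - 1 :=
        Real.log_le_sub_one_of_pos (by positivity)
      rw [one_div, Real.log_inv] at h1
      have h2 : (1 - d) * (-Real.log (1 - d)) ≤ (1 - d) * ((1 - d)⁻¹ - 1) := by
        apply mul_le_mul_of_nonneg_left _ h1d.le
        linarith
      have h3 : (1 - d) * ((1 - d)⁻¹ - 1) = d := by field_simp; ring
      nlinarith [h2, h3.le]
    linarith
  · -- calculus case on [1/3, 1/2]
    set Φ : ℝ → ℝ := fun x => (1 - x) * Real.log (1 - x) - x * Real.log x with hΦ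
    have key : AntitoneOn Φ (Set.Icc (1/3 : ℝ) (1/2)) := by
      have hderiv : ∀ x ∈ Set.Ioo (1/3 : ℝ) (1/2),
          HasDerivAt Φ (-(Real.log (1 - x) + 1) - (Real.log x + 1)) x := by
        intro x hx
        obtain ⟨hx1, hx2⟩ := hx
        have hxne : x ≠ 0 := by linarith
        have hx1ne : 1 - x ≠ 0 := by intro h; linarith
        have h1 : HasDerivAt (fun y : ℝ => y * Real.log y) (Real.log x + 1) x :=
          Real.hasDerivAt_mul_log hxne
        have hinner : HasDerivAt (fun y : ℝ => 1 - y) (-1 : ℝ) x := by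
          simpa using (hasDerivAt_id x).const_sub 1
        have h2 : HasDerivAt (fun y : ℝ => (1 - y) * Real.log (1 - y))
            ((Real.log (1 - x) + 1) * (-1)) x :=
          (Real.hasDerivAt_mul_log hx1ne).comp x hinner
        have := h2.sub h1
        exact this.congr_deriv (by ring)
      apply antitoneOn_of_deriv_nonpos (convex_Icc _ _)
      · -- continuity
        have : Continuous Φ := by
          apply Continuous.sub
          · exact Real.continuous_mul_log.comp (continuous_const.sub continuous_id)
          · exact Real.continuous_mul_log
        exact this.continuousOn
      · intro x hx
        rw [interior_Icc] at hx
        exact ((hderiv x hx).differentiableAt).differentiableWithinAt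
      · intro x hx
        rw [interior_Icc] at hx
        rw [(hderiv x hx).deriv]
        obtain ⟨hx1, hx2⟩ := hx
        have hxpos : 0 < x := by linarith
        have h1x : 0 < 1 - x := by linarith
        have hsum : Real.log (1 - x) + Real.log x = Real.log ((1 - x) * x) :=
          (Real.log_mul h1x.ne' hxpos.ne').symm
        have hq : (2:ℝ)/9 ≤ (1 - x) * x := by nlinarith
        have hexp2 : Real.exp (-2) ≤ (2:ℝ)/9 := by
          rw [Real.exp_neg]
          rw [inv_le_comm₀ (Real.exp_pos 2) (by norm_num)]
          have : Real.exp 2 = Real.exp 1 * Real.exp 1 := by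
            rw [← Real.exp_add]; norm_num
          nlinarith [Real.exp_one_gt_d9]
        have hlog : (-2 : ℝ) ≤ Real.log ((1 - x) * x) :=
          (Real.le_log_iff_exp_le (by positivity)).2 (hexp2.trans hq)
        linarith [hsum, hlog]
    have h12 : Φ (1/2) = 0 := by norm_num [hΦ]
    have := key (Set.mem_Icc.2 ⟨h3.le, hd2⟩) (Set.mem_Icc.2 ⟨by norm_num, le_refl _⟩) hd2
    rw [h12] at this
    simp only [hΦ] at this
    linarith

private lemma percoord {qm wm : ℝ} (hq0 : 0 ≤ qm) (hq1 : qm ≤ 1) (hw0 : 0 ≤ wm)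
    (hw1 : wm ≤ 1) (hd : wm - qm ≤ 1/2) :
    wm * Real.log wm - qm * Real.log qm ≤ -(|wm - qm| * Real.log |wm - qm|) := by
  rcases le_total wm qm with h | h
  · have hsup := mul_log_superadd hw0 (sub_nonneg.2 h)
    have e : wm + (qm - wm) = qm := by ring
    rw [e] at hsup
    rw [abs_of_nonpos (by linarith), neg_sub]
    linarith
  · have hup1 := up1 hq0 (sub_nonneg.2 h) (by linarith : qm + (wm - qm) ≤ 1)
    have e : qm + (wm - qm) = wm := by ring
    rw [e] at hup1
    have hup2 := up2 (sub_nonneg.2 h) hd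
    rw [abs_of_nonneg (by linarith)]
    linarith

private lemma claimA {ι : Type*} [Fintype ι] (w q : ι → ℝ)
    (hw0 : ∀ m, 0 ≤ w m) (hw1 : ∑ m, w m = 1)
    (hq0 : ∀ m, 0 ≤ q m) (hq1 : ∑ m, q m = 1)
    {t : ℝ} (ht : 0 < t) (ht4 : t ≤ 1/4) :
    ∑ m, w m * Real.log (w m) ≤ ∑ m, q m * Real.log (q m)
      + (∑ m, |w m - q m|) * (Real.log (Fintype.card ι) - Real.log t - 1) + t := by
  classical
  have hne : Nonempty ι := by
    rcases isEmpty_or_nonempty ι with h | h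
    · exfalso; rw [Finset.sum_eq_zero (fun m _ => (h.false m).elim)] at hw1; norm_num at hw1
    · exact h
  have hNpos : (0 : ℝ) < Fintype.card ι := by
    have := Fintype.card_pos (α := ι); exact_mod_cast this
  have hN1 : (1 : ℝ) ≤ Fintype.card ι := by exact_mod_cast Fintype.card_pos
  have hlogN : 0 ≤ Real.log (Fintype.card ι) := Real.log_nonneg hN1
  have hlogt : Real.log t + 1 ≤ 0 := by
    have h1 : Real.log t ≤ Real.log (1/4) := Real.log_le_log ht ht4
    have h2 : Real.log (1/4) = -Real.log 4 := by rw [one_div, Real.log_inv]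
    have h3 : 1 < Real.log 4 := (Real.lt_log_iff_exp_lt (by norm_num)).2
      (by linarith [exp_one_lt_3])
    linarith
  set θ := ∑ m, |w m - q m| with hθdef
  have hθ0 : 0 ≤ θ := Finset.sum_nonneg (fun m _ => abs_nonneg _)
  have hwle1 : ∀ m, w m ≤ 1 := fun m =>
    hw1 ▸ Finset.single_le_sum (fun i _ => hw0 i) (Finset.mem_univ m)
  have hqle1 : ∀ m, q m ≤ 1 := fun m =>
    hq1 ▸ Finset.single_le_sum (fun i _ => hq0 i) (Finset.mem_univ m)
  rcases le_or_gt θ 1 with hθ1 | hθ1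
  · -- small θ case
    have htrick : ∀ m, 2 * |w m - q m| ≤ θ := by
      intro m
      have hsumz : ∑ j, (w j - q j) = 0 := by
        rw [Finset.sum_sub_distrib, hw1, hq1]; ring
      have herase : ∑ j ∈ Finset.univ.erase m, (w j - q j) = -(w m - q m) := by
        have h := Finset.add_sum_erase Finset.univ (fun j => w j - q j) (Finset.mem_univ m)
        rw [hsumz] at h
        linarith
      have h1 : |w m - q m| ≤ ∑ j ∈ Finset.univ.erase m, |w j - q j| := by
        calc |w m - q m| = |∑ j ∈ Finset.univ.erase m, (w j - q j)| := by
              rw [herase, abs_neg]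
          _ ≤ ∑ j ∈ Finset.univ.erase m, |w j - q j| := Finset.abs_sum_le_sum_abs _ _
      have h2 : |w m - q m| + ∑ j ∈ Finset.univ.erase m, |w j - q j| = θ :=
        Finset.add_sum_erase Finset.univ (fun j => |w j - q j|) (Finset.mem_univ m)
      linarith
    have hkey : ∑ m, (w m * Real.log (w m) - q m * Real.log (q m))
        ≤ ∑ m, -(|w m - q m| * Real.log |w m - q m|) := by
      apply Finset.sum_le_sum
      intro m _
      exact percoord (hq0 m) (hqle1 m) (hw0 m) (hwle1 m) (by
        have := htrick m
        have := le_abs_self (w m - q m)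
        linarith)
    have hgibbs : ∑ m, -(|w m - q m| * Real.log |w m - q m|)
        ≤ θ * Real.log (Fintype.card ι) - θ * Real.log θ := by
      rcases eq_or_lt_of_le hθ0 with h0 | h0
      · have hz : ∀ m, |w m - q m| = 0 := by
          intro m
          have := htrick m
          have := abs_nonneg (w m - q m)
          linarith
        rw [← h0]
        rw [Finset.sum_eq_zero (fun m _ => by rw [hz m]; simp)]
        simp
      · have hterm : ∀ m, |w m - q m| * (Real.log (θ / Fintype.card ι) - Real.log |w m - q m|)
            ≤ θ / Fintype.card ι - |w m - q m| :=
          fun m => mul_log_sub (abs_nonneg _) (by positivity)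
        have hsum := Finset.sum_le_sum (fun m (_ : m ∈ Finset.univ) => hterm m)
        have hexp : ∑ m, |w m - q m| * (Real.log (θ / Fintype.card ι) - Real.log |w m - q m|)
            = Real.log (θ / Fintype.card ι) * θ
              - ∑ m, |w m - q m| * Real.log |w m - q m| := by
          rw [Finset.sum_congr rfl (fun m (_ : m ∈ Finset.univ) => by
            ring : ∀ m ∈ Finset.univ, |w m - q m| * (Real.log (θ / Fintype.card ι) - Real.log |w m - q m|)
              = Real.log (θ / Fintype.card ι) * |w m - q m|
                - |w m - q m| * Real.log |w m - q m|)]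
          rw [Finset.sum_sub_distrib, ← Finset.mul_sum, ← hθdef]
        have hrhs : ∑ m, (θ / (Fintype.card ι : ℝ) - |w m - q m|) = θ - θ := by
          rw [Finset.sum_sub_distrib, Finset.sum_const, Finset.card_univ, ← hθdef,
            nsmul_eq_mul, mul_div_cancel₀ _ hNpos.ne']
        rw [hexp, hrhs] at hsum
        have hlogdiv : Real.log (θ / Fintype.card ι)
            = Real.log θ - Real.log (Fintype.card ι) :=
          Real.log_div h0.ne' hNpos.ne'
        have hneg : ∑ m, -(|w m - q m| * Real.log |w m - q m|)
            = -∑ m, |w m - q m| * Real.log |w m - q m| := by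
          rw [Finset.sum_neg_distrib]
        rw [hneg]
        rw [hlogdiv] at hsum
        nlinarith [hsum]
    have htang := neg_mul_log_le_tangent hθ0 ht
    have hsplit : ∑ m, (w m * Real.log (w m) - q m * Real.log (q m))
        = ∑ m, w m * Real.log (w m) - ∑ m, q m * Real.log (q m) :=
      Finset.sum_sub_distrib _ _
    have e : θ * (Real.log (Fintype.card ι) - Real.log t - 1)
        = θ * Real.log (Fintype.card ι) + θ * (-Real.log t - 1) := by ring
    linarith [hkey, hgibbs, htang, hsplit ▸ hkey]
  · -- large θ case
    have h1 : ∑ m, w m * Real.log (w m) ≤ 0 :=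
      Finset.sum_nonpos (fun m _ => Real.mul_log_nonpos (hw0 m) (hwle1 m))
    have h2 : -∑ m, q m * Real.log (q m) ≤ Real.log (Fintype.card ι) := by
      have hterm : ∀ m, q m * (Real.log (1 / Fintype.card ι) - Real.log (q m))
          ≤ 1 / Fintype.card ι - q m :=
        fun m => mul_log_sub (hq0 m) (by positivity)
      have hsum := Finset.sum_le_sum (fun m (_ : m ∈ Finset.univ) => hterm m)
      have hexp : ∑ m, q m * (Real.log (1 / Fintype.card ι) - Real.log (q m))
          = Real.log (1 / (Fintype.card ι : ℝ)) * 1 - ∑ m, q m * Real.log (q m) := by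
        rw [Finset.sum_congr rfl (fun m (_ : m ∈ Finset.univ) => by
          ring : ∀ m ∈ Finset.univ, q m * (Real.log (1 / Fintype.card ι) - Real.log (q m))
            = Real.log (1 / Fintype.card ι) * q m - q m * Real.log (q m))]
        rw [Finset.sum_sub_distrib, ← Finset.mul_sum, hq1]
      have hrhs : ∑ m, ((1 : ℝ) / (Fintype.card ι : ℝ) - q m) = 1 - 1 := by
        rw [Finset.sum_sub_distrib, Finset.sum_const, Finset.card_univ, hq1,
          nsmul_eq_mul, mul_one_div, div_self hNpos.ne']
      rw [hexp, hrhs] at hsum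
      have hloginv : Real.log (1 / (Fintype.card ι : ℝ)) = -Real.log (Fintype.card ι) := by
        rw [one_div, Real.log_inv]
      rw [hloginv] at hsum
      linarith
    nlinarith [h1, h2, mul_nonneg (by linarith : (0:ℝ) ≤ θ - 1)
      (by linarith : (0:ℝ) ≤ Real.log (Fintype.card ι) - Real.log t - 1), ht]

private lemma pointwise_bound {ι : Type*} [Fintype ι] (q : ι → ℝ) (pz : ι → ℝ) (sz : ℝ)
    (hq0 : ∀ m, 0 ≤ q m) (hq1 : ∑ m, q m = 1) (hp0 : ∀ m, 0 ≤ pz m)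
    (hs : sz = ∑ m, q m * pz m) {ε : ℝ} (hε : 0 < ε) (hε8 : 8 * ε < 1) :
    ∑ m, q m * (pz m * Real.log (pz m / sz))
      ≤ (Real.log (Fintype.card ι) - Real.log (2*ε) - 1) * (∑ m, q m * |pz m - sz|)
        + (2*ε) * sz + ∑ m, (q m * Real.log (q m)) * (sz - pz m) := by
  classical
  have hsz0 : 0 ≤ sz := by
    rw [hs]; exact Finset.sum_nonneg fun m _ => mul_nonneg (hq0 m) (hp0 m)
  rcases eq_or_lt_of_le hsz0 with hsz | hsz
  · -- sz = 0
    have hqp : ∀ m, q m * pz m = 0 := by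
      intro m
      exact (Finset.sum_eq_zero_iff_of_nonneg
        (fun i _ => mul_nonneg (hq0 i) (hp0 i))).1 (hs ▸ hsz.symm) m (Finset.mem_univ m)
    have hL : ∑ m, q m * (pz m * Real.log (pz m / sz)) = 0 := by
      apply Finset.sum_eq_zero; intro m _
      rcases mul_eq_zero.1 (hqp m) with h | h
      · rw [h, zero_mul]
      · rw [h, zero_mul, mul_zero]
    have hT : ∑ m, q m * |pz m - sz| = 0 := by
      apply Finset.sum_eq_zero; intro m _
      rcases mul_eq_zero.1 (hqp m) with h | h
      · rw [h, zero_mul]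
      · rw [h, ← hsz, sub_zero, abs_zero, mul_zero]
    have hE : ∑ m, (q m * Real.log (q m)) * (sz - pz m) = 0 := by
      apply Finset.sum_eq_zero; intro m _
      rcases mul_eq_zero.1 (hqp m) with h | h
      · rw [h, zero_mul, zero_mul]
      · rw [h, ← hsz, sub_zero, mul_zero]
    rw [hL, hT, hE, ← hsz]
    simp
  · -- sz > 0
    set w : ι → ℝ := fun m => q m * pz m / sz with hwdef
    have hw0 : ∀ m, 0 ≤ w m := fun m => div_nonneg (mul_nonneg (hq0 m) (hp0 m)) hsz0
    have hw1 : ∑ m, w m = 1 := by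
      rw [hwdef]
      rw [← Finset.sum_div, ← hs, div_self hsz.ne']
    have hA := claimA w q hw0 hw1 hq0 hq1 (t := 2*ε) (by linarith) (by linarith)
    have hθT : (∑ m, |w m - q m|) * sz = ∑ m, q m * |pz m - sz| := by
      rw [Finset.sum_mul]
      apply Finset.sum_congr rfl; intro m _
      have e : w m - q m = q m * (pz m - sz) / sz := by
        rw [hwdef]; field_simp
      rw [e, abs_div, abs_of_pos hsz, div_mul_cancel₀ _ hsz.ne', abs_mul,
        abs_of_nonneg (hq0 m)]
    have hG : ∑ m, q m * (pz m * Real.log (pz m / sz))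
        = sz * (∑ m, w m * Real.log (w m)) - ∑ m, (q m * Real.log (q m)) * pz m := by
      rw [Finset.mul_sum, ← Finset.sum_sub_distrib]
      apply Finset.sum_congr rfl; intro m _
      rcases eq_or_lt_of_le (hq0 m) with hq | hq
      · simp [hwdef, ← hq]
      rcases eq_or_lt_of_le (hp0 m) with hp | hp
      · simp [hwdef, ← hp]
      have e1 : Real.log (pz m / sz) = Real.log (pz m) - Real.log sz :=
        Real.log_div hp.ne' hsz.ne'
      have e2 : Real.log (w m) = Real.log (q m) + Real.log (pz m) - Real.log sz := by
        rw [hwdef]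
        show Real.log (q m * pz m / sz) = _
        rw [Real.log_div (mul_pos hq hp).ne' hsz.ne', Real.log_mul hq.ne' hp.ne']
      rw [e1, e2, hwdef]
      field_simp
      ring
    have hE : ∑ m, (q m * Real.log (q m)) * (sz - pz m)
        = (∑ m, q m * Real.log (q m)) * sz - ∑ m, (q m * Real.log (q m)) * pz m := by
      rw [Finset.sum_congr rfl (fun m (_ : m ∈ Finset.univ) =>
        mul_sub (q m * Real.log (q m)) sz (pz m)), Finset.sum_sub_distrib, ← Finset.sum_mul]
    have hmul := mul_le_mul_of_nonneg_left hA hsz0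
    have h2 : sz * (∑ m, w m * Real.log (w m))
        ≤ (∑ m, q m * Real.log (q m)) * sz
          + (Real.log (Fintype.card ι) - Real.log (2*ε) - 1)
            * ((∑ m, |w m - q m|) * sz) + 2*ε*sz := by
      calc sz * (∑ m, w m * Real.log (w m))
          ≤ sz * (∑ m, q m * Real.log (q m)
            + (∑ m, |w m - q m|) * (Real.log (Fintype.card ι) - Real.log (2*ε) - 1)
            + 2*ε) := hmul
        _ = (∑ m, q m * Real.log (q m)) * sz
            + (Real.log (Fintype.card ι) - Real.log (2*ε) - 1)
              * ((∑ m, |w m - q m|) * sz) + 2*ε*sz := by ring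
    rw [hθT] at h2
    rw [hG, hE]
    linarith [h2]

private lemma final_arith {N kR ε : ℝ} (hN2 : 2 ≤ N) (hNR : Real.log N ≤ kR)
    (hε : 0 < ε) (hε8 : 8 * ε < 1) :
    (Real.log N - Real.log (2*ε) - 1) * (2*ε) + 2*ε
      ≤ 8 * ε * kR - 8 * ε * Real.log (8*ε) := by
  have hlog2 : 0 < Real.log 2 := Real.log_pos one_lt_two
  have hlogN2 : Real.log 2 ≤ Real.log N := Real.log_le_log two_pos hN2
  have h2kR : Real.log 2 ≤ kR := le_trans hlogN2 hNR
  have hl2ε : Real.log (2*ε) = Real.log 2 + Real.log ε := Real.log_mul two_ne_zero hε.ne'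
  have hl8ε : Real.log (8*ε) = Real.log 8 + Real.log ε := Real.log_mul (by norm_num) hε.ne'
  have hlog8 : Real.log 8 = 3 * Real.log 2 := by
    rw [show (8:ℝ) = 2^3 by norm_num, Real.log_pow]
    push_cast; ring
  have hlogε : Real.log ε ≤ -3 * Real.log 2 := by
    have h1 : Real.log ε ≤ Real.log (1/8) := Real.log_le_log hε (by linarith)
    rw [one_div, Real.log_inv, hlog8] at h1
    linarith
  rw [hl2ε, hl8ε, hlog8]
  nlinarith [mul_le_mul_of_nonneg_left hNR (by linarith : (0:ℝ) ≤ 2*ε),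
    mul_le_mul_of_nonneg_left h2kR (by linarith : (0:ℝ) ≤ 6*ε),
    mul_le_mul_of_nonneg_left hlogε (by linarith : (0:ℝ) ≤ 6*ε),
    mul_pos hε hlog2]

/-- (Mutual information bound from total-variation closeness; cf. Csiszár.)
Let `M` be a discrete message with distribution `q` on a finite set of at most `e^{kR}`
values, and let `Z ∈ ℂᵏ` have conditional densities `p_m` given `M = m`, all within `L¹`
distance `ε ≤ 1/2` of a common density `f`. If `8ε < 1`, then the mutual information
`I(M;Z) = ∑_m q(m) ∫ p_m(z) log(p_m(z)/p_Z(z)) dz`, where `p_Z = ∑_m q(m) p_m` is the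
output marginal, satisfies `I(M;Z) ≤ 8εkR − 8ε log(8ε)`. -/
theorem mutual_information_le_of_tv_close
    (k : ℕ) (R ε : ℝ) (ι : Type*) [Fintype ι] [Nonempty ι]
    (q : ι → ℝ) (hq0 : ∀ m, 0 ≤ q m) (hq1 : ∑ m, q m = 1)
    (p : ι → (Fin k → ℂ) → ℝ) (hp0 : ∀ m z, 0 ≤ p m z)
    (hpmeas : ∀ m, Measurable (p m)) (hp1 : ∀ m, (∫ z, p m z) = 1)
    (f : (Fin k → ℂ) → ℝ) (hf0 : ∀ z, 0 ≤ f z) (hfmeas : Measurable f)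
    (hf1 : (∫ z, f z) = 1)
    (hcard : (Fintype.card ι : ℝ) ≤ Real.exp (k * R))
    (hε : ε ≤ 1 / 2) (hε8 : 8 * ε < 1)
    (hclose : ∀ m, (∫ z, |p m z - f z|) ≤ ε) :
    ∑ m, q m * ∫ z, p m z * Real.log (p m z / ∑ m', q m' * p m' z)
      ≤ 8 * ε * k * R - 8 * ε * Real.log (8 * ε) := by
  classical
  obtain ⟨m₀⟩ := (inferInstance : Nonempty ι)
  have hε0 : 0 ≤ ε := le_trans (integral_nonneg fun z => abs_nonneg _) (hclose m₀)
  have hpint : ∀ m, Integrable (p m) := by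
    intro m; by_contra h
    have h1 := hp1 m
    rw [integral_undef h] at h1
    norm_num at h1
  have hfint : Integrable f := by
    by_contra h
    rw [integral_undef h] at hf1; norm_num at hf1
  set S : (Fin k → ℂ) → ℝ := fun z => ∑ m', q m' * p m' z with hSdef
  have hSval : ∀ z, S z = ∑ m', q m' * p m' z := fun z => by simp only [hSdef]
  have hgoal_rw : ∀ m, (∫ z, p m z * Real.log (p m z / ∑ m', q m' * p m' z))
      = ∫ z, p m z * Real.log (p m z / S z) := fun m => by simp only [hSdef]
  have hLrw : ∑ m, q m * ∫ z, p m z * Real.log (p m z / ∑ m', q m' * p m' z)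
      = ∑ m, q m * ∫ z, p m z * Real.log (p m z / S z) :=
    Finset.sum_congr rfl fun m _ => by rw [hgoal_rw m]
  rw [hLrw]
  have hSmeas : Measurable S := by
    rw [hSdef]
    exact Finset.measurable_sum _ fun m _ => (hpmeas m).const_mul _
  have hS0 : ∀ z, 0 ≤ S z := by
    intro z
    rw [hSval z]
    exact Finset.sum_nonneg fun m _ => mul_nonneg (hq0 m) (hp0 m z)
  have hSint : Integrable S := by
    rw [hSdef]
    exact integrable_finset_sum _ fun m _ => (hpint m).const_mul _
  have hSint1 : ∫ z, S z = 1 := by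
    have e1 : ∫ z, S z = ∫ z, ∑ m', q m' * p m' z := by simp only [hSdef]
    rw [e1, integral_finset_sum _ fun m _ => (hpint m).const_mul _]
    have e2 : ∀ m, (∫ z, q m * p m z) = q m := fun m => by
      rw [integral_const_mul, hp1 m, mul_one]
    rw [Finset.sum_congr rfl fun m _ => e2 m]
    exact hq1
  rcases eq_or_lt_of_le hε0 with hε0' | hεpos
  · -- ε = 0 case
    have hae : ∀ m, ∀ᵐ z, p m z = f z := by
      intro m
      have h0 : ∫ z, |p m z - f z| = 0 :=
        le_antisymm (hε0' ▸ hclose m) (integral_nonneg fun z => abs_nonneg _)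
      have hint : Integrable fun z => |p m z - f z| := ((hpint m).sub hfint).abs
      have hz := (integral_eq_zero_iff_of_nonneg (fun z => abs_nonneg _) hint).1 h0
      filter_upwards [hz] with z hz1
      have h2 : |p m z - f z| = 0 := hz1
      have h3 := abs_eq_zero.1 h2
      linarith
    have haeAll : ∀ᵐ z, ∀ m, p m z = f z := ae_all_iff.2 hae
    have hzero : ∀ m, ∫ z, p m z * Real.log (p m z / S z) = 0 := by
      intro m
      have hcongr : (fun z => p m z * Real.log (p m z / S z)) =ᵐ[volume]
          (fun _ => (0:ℝ)) := by
        filter_upwards [haeAll] with z hz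
        have hSz : S z = f z := by
          calc S z = ∑ m', q m' * f z := by
                rw [hSval z]
                exact Finset.sum_congr rfl fun m' _ => by rw [hz m']
            _ = f z := by rw [← Finset.sum_mul, hq1, one_mul]
        show p m z * Real.log (p m z / S z) = 0
        rw [hz m, hSz]
        rcases eq_or_lt_of_le (hf0 z) with h | h
        · rw [← h, zero_mul]
        · rw [div_self h.ne', Real.log_one, mul_zero]
      rw [integral_congr_ae hcongr, integral_zero]
    have hL0 : ∑ m, q m * ∫ z, p m z * Real.log (p m z / S z) = 0 := by
      rw [Finset.sum_congr rfl fun m _ => by rw [hzero m, mul_zero]]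
      exact Finset.sum_const_zero
    rw [hL0, ← hε0']
    norm_num
  · -- ε > 0
    have hkR0 : (0:ℝ) ≤ k * R := by
      have h1 : (1:ℝ) ≤ Fintype.card ι := by
        have := Fintype.card_pos (α := ι); exact_mod_cast this
      have h2 : (1:ℝ) ≤ Real.exp (k*R) := le_trans h1 hcard
      rwa [Real.one_le_exp_iff] at h2
    rcases eq_or_ne (Fintype.card ι) 1 with hcard1 | hcardne
    · -- card = 1
      obtain ⟨a, ha⟩ := Fintype.card_eq_one_iff.1 hcard1
      have huniv : (Finset.univ : Finset ι) = {a} :=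
        Finset.eq_singleton_iff_unique_mem.2 ⟨Finset.mem_univ a, fun b _ => ha b⟩
      have hqa : q a = 1 := by rw [huniv, Finset.sum_singleton] at hq1; exact hq1
      have hSz : ∀ z, S z = p a z := by
        intro z; rw [hSval z, huniv, Finset.sum_singleton, hqa, one_mul]
      have hzero : ∀ m, ∫ z, p m z * Real.log (p m z / S z) = 0 := by
        intro m
        have hm : m = a := ha m
        subst hm
        have hptz : ∀ z, p m z * Real.log (p m z / S z) = 0 := by
          intro z
          rw [hSz z]
          rcases eq_or_lt_of_le (hp0 m z) with h | h
          · rw [← h, zero_mul]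
          · rw [div_self h.ne', Real.log_one, mul_zero]
        simp_rw [hptz]
        exact integral_zero _ _
      have hL0 : ∑ m, q m * ∫ z, p m z * Real.log (p m z / S z) = 0 := by
        rw [Finset.sum_congr rfl fun m _ => by rw [hzero m, mul_zero]]
        exact Finset.sum_const_zero
      rw [hL0]
      have hlog8ε : Real.log (8*ε) < 0 := Real.log_neg (by linarith) (by linarith)
      nlinarith [mul_nonneg (by linarith : (0:ℝ) ≤ 8*ε) hkR0,
        mul_pos (by linarith : (0:ℝ) < 8*ε) (neg_pos.2 hlog8ε)]
    · -- card ≥ 2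
      have hN2 : (2:ℝ) ≤ Fintype.card ι := by
        have h1 := Fintype.card_pos (α := ι)
        have h2 : 2 ≤ Fintype.card ι := by omega
        exact_mod_cast h2
      have hNR : Real.log (Fintype.card ι) ≤ k * R := by
        have h1 : (0:ℝ) < Fintype.card ι := by positivity
        calc Real.log (Fintype.card ι) ≤ Real.log (Real.exp (k*R)) :=
              Real.log_le_log h1 hcard
          _ = k*R := Real.log_exp _
      have hqle1 : ∀ m, q m ≤ 1 := fun m =>
        le_trans (Finset.single_le_sum (fun i _ => hq0 i) (Finset.mem_univ m)) (le_of_eq hq1)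
      have hqpS : ∀ m z, q m * p m z ≤ S z := by
        intro m z
        rw [hSval z]
        exact Finset.single_le_sum (f := fun m' => q m' * p m' z)
          (fun i _ => mul_nonneg (hq0 i) (hp0 i z)) (Finset.mem_univ m)
      have hint_pf : ∀ m, Integrable (fun z => |p m z - f z|) volume :=
        fun m => ((hpint m).sub hfint).abs
      have hint_fp : ∀ m, Integrable (fun z => |f z - p m z|) volume :=
        fun m => (hfint.sub (hpint m)).abs
      have hint_qfp : ∀ m, Integrable (fun z => q m * |f z - p m z|) volume :=
        fun m => (hint_fp m).const_mul _
      have hint_fS : Integrable (fun z => |f z - S z|) volume := (hfint.sub hSint).abs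
      have hint_pS : ∀ m, Integrable (fun z => |p m z - S z|) volume :=
        fun m => ((hpint m).sub hSint).abs
      have hint_pffS : ∀ m, Integrable (fun z => |p m z - f z| + |f z - S z|) volume :=
        fun m => (hint_pf m).add hint_fS
      have hint_Sp : ∀ m, Integrable (fun z => S z - p m z) volume :=
        fun m => hSint.sub (hpint m)
      have hFmeas : ∀ m, AEStronglyMeasurable
          (fun z => p m z * Real.log (p m z / S z)) volume := fun m =>
        ((hpmeas m).mul (Real.measurable_log.comp ((hpmeas m).div hSmeas))).aestronglyMeasurable
      have hFbound : ∀ m, 0 < q m → ∀ z,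
          |p m z * Real.log (p m z / S z)| ≤ -Real.log (q m) * p m z + S z := by
        intro m hm z
        have hlq : 0 ≤ -Real.log (q m) := by
          rw [neg_nonneg]; exact Real.log_nonpos hm.le (hqle1 m)
        rcases eq_or_lt_of_le (hp0 m z) with hp | hp
        · rw [← hp, zero_mul, abs_zero, mul_zero, zero_add]
          exact hS0 z
        · have hsz : 0 < S z := lt_of_lt_of_le (mul_pos hm hp) (hqpS m z)
          rw [abs_le]
          constructor
          · have h1 : p m z * (Real.log (S z) - Real.log (p m z)) ≤ S z - p m z :=
              mul_log_sub (hp0 m z) hsz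
            have e : Real.log (p m z / S z) = Real.log (p m z) - Real.log (S z) :=
              Real.log_div hp.ne' hsz.ne'
            have h2 : 0 ≤ -Real.log (q m) * p m z := mul_nonneg hlq (hp0 m z)
            rw [e]; nlinarith [h1, h2, hp0 m z]
          · have hds : p m z / S z ≤ 1 / q m := by
              rw [div_le_div_iff₀ hsz hm]
              nlinarith [hqpS m z]
            have h1 : Real.log (p m z / S z) ≤ Real.log (1 / q m) :=
              Real.log_le_log (by positivity) hds
            rw [one_div, Real.log_inv] at h1
            nlinarith [mul_le_mul_of_nonneg_left h1 (hp0 m z), hS0 z]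
      have hFint : ∀ m, 0 < q m →
          Integrable (fun z => p m z * Real.log (p m z / S z)) := by
        intro m hm
        apply Integrable.mono' (((hpint m).const_mul (-Real.log (q m))).add hSint) (hFmeas m)
        filter_upwards with z
        rw [Real.norm_eq_abs]
        exact hFbound m hm z
      have hqFint : ∀ m, Integrable (fun z => q m * (p m z * Real.log (p m z / S z))) := by
        intro m
        rcases eq_or_lt_of_le (hq0 m) with hm | hm
        · simp only [← hm, zero_mul]
          exact integrable_zero _ _ _
        · exact (hFint m hm).const_mul _
      have hswap : ∑ m, q m * ∫ z, p m z * Real.log (p m z / S z)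
          = ∫ z, ∑ m, q m * (p m z * Real.log (p m z / S z)) := by
        rw [integral_finset_sum _ fun m _ => hqFint m]
        exact Finset.sum_congr rfl fun m _ => (integral_const_mul _ _).symm
      have hTmint : ∀ m, Integrable (fun z => q m * |p m z - S z|) :=
        fun m => ((hint_pS m).const_mul _)
      have hfS : ∫ z, |f z - S z| ≤ ε := by
        have hptw : ∀ z, |f z - S z| ≤ ∑ m, q m * |f z - p m z| := by
          intro z
          have e : f z - S z = ∑ m, q m * (f z - p m z) := by
            rw [Finset.sum_congr rfl (fun m (_ : m ∈ Finset.univ) =>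
              mul_sub (q m) (f z) (p m z)), Finset.sum_sub_distrib,
              ← Finset.sum_mul, hq1, one_mul, hSval z]
          rw [e]
          calc |∑ m, q m * (f z - p m z)| ≤ ∑ m, |q m * (f z - p m z)| :=
                Finset.abs_sum_le_sum_abs _ _
            _ = ∑ m, q m * |f z - p m z| := Finset.sum_congr rfl fun m _ => by
                rw [abs_mul, abs_of_nonneg (hq0 m)]
        calc ∫ z, |f z - S z| ≤ ∫ z, ∑ m, q m * |f z - p m z| :=
              integral_mono hint_fS
                (integrable_finset_sum _ fun m _ => hint_qfp m) hptw
          _ = ∑ m, q m * ∫ z, |f z - p m z| := by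
              rw [integral_finset_sum _ fun m _ => hint_qfp m]
              exact Finset.sum_congr rfl fun m _ => integral_const_mul _ _
          _ ≤ ∑ m, q m * ε := Finset.sum_le_sum fun m _ => by
              apply mul_le_mul_of_nonneg_left _ (hq0 m)
              have e2 : ∫ z, |f z - p m z| = ∫ z, |p m z - f z| := by
                simp_rw [abs_sub_comm]
              rw [e2]; exact hclose m
          _ = ε := by rw [← Finset.sum_mul, hq1, one_mul]
      have hTle : ∫ z, (∑ m, q m * |p m z - S z|) ≤ 2*ε := by
        have h1 : ∀ m, ∫ z, |p m z - S z| ≤ 2*ε := by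
          intro m
          calc ∫ z, |p m z - S z|
              ≤ ∫ z, (|p m z - f z| + |f z - S z|) :=
                integral_mono (hint_pS m) (hint_pffS m) (fun z => abs_sub_le _ _ _)
            _ = (∫ z, |p m z - f z|) + ∫ z, |f z - S z| :=
                integral_add (hint_pf m) hint_fS
            _ ≤ ε + ε := add_le_add (hclose m) hfS
            _ = 2*ε := by ring
        calc ∫ z, (∑ m, q m * |p m z - S z|)
            = ∑ m, q m * ∫ z, |p m z - S z| := by
              rw [integral_finset_sum _ fun m _ => hTmint m]
              exact Finset.sum_congr rfl fun m _ => integral_const_mul _ _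
          _ ≤ ∑ m, q m * (2*ε) := Finset.sum_le_sum fun m _ =>
              mul_le_mul_of_nonneg_left (h1 m) (hq0 m)
          _ = 2*ε := by rw [← Finset.sum_mul, hq1, one_mul]
      set c : ℝ := Real.log (Fintype.card ι) - Real.log (2*ε) - 1 with hcdef
      have hpt : ∀ z, (∑ m, q m * (p m z * Real.log (p m z / S z)))
          ≤ c * (∑ m, q m * |p m z - S z|) + (2*ε) * S z
            + ∑ m, (q m * Real.log (q m)) * (S z - p m z) := by
        intro z
        exact pointwise_bound q (fun m => p m z) (S z) hq0 hq1 (fun m => hp0 m z)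
          (hSval z) hεpos hε8
      have hc0 : 0 ≤ c := by
        rw [hcdef]
        have h1 : 0 < Real.log 2 := Real.log_pos one_lt_two
        have h2 : Real.log 2 ≤ Real.log (Fintype.card ι) := Real.log_le_log two_pos hN2
        have h3 : Real.log (2*ε) ≤ Real.log (1/4) :=
          Real.log_le_log (by linarith) (by linarith)
        have h4 : Real.log ((1:ℝ)/4) = -Real.log 4 := by rw [one_div, Real.log_inv]
        have h5 : 1 < Real.log 4 := (Real.lt_log_iff_exp_lt (by norm_num)).2
          (by linarith [exp_one_lt_3])
        linarith
      have hTint : Integrable (fun z => ∑ m, q m * |p m z - S z|) :=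
        integrable_finset_sum _ fun m _ => hTmint m
      have hRint1 : Integrable (fun z => c * (∑ m, q m * |p m z - S z|)) :=
        hTint.const_mul _
      have hRint2 : Integrable (fun z => (2*ε) * S z) := hSint.const_mul _
      have hRint3m : ∀ m, Integrable (fun z => (q m * Real.log (q m)) * (S z - p m z)) :=
        fun m => ((hint_Sp m).const_mul _)
      have hRint3 : Integrable (fun z => ∑ m, (q m * Real.log (q m)) * (S z - p m z)) :=
        integrable_finset_sum _ fun m _ => hRint3m m
      have hRint12 : Integrable (fun z => c * (∑ m, q m * |p m z - S z|)
          + (2*ε) * S z) := hRint1.add hRint2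
      have hRintAll : Integrable (fun z => c * (∑ m, q m * |p m z - S z|)
          + (2*ε) * S z + ∑ m, (q m * Real.log (q m)) * (S z - p m z)) :=
        hRint12.add hRint3
      have hGint : Integrable (fun z => ∑ m, q m * (p m z * Real.log (p m z / S z))) :=
        integrable_finset_sum _ fun m _ => hqFint m
      have hInt : ∫ z, (∑ m, q m * (p m z * Real.log (p m z / S z)))
          ≤ ∫ z, (c * (∑ m, q m * |p m z - S z|) + (2*ε) * S z
            + ∑ m, (q m * Real.log (q m)) * (S z - p m z)) :=
        integral_mono hGint hRintAll hpt
      have hRcalc : ∫ z, (c * (∑ m, q m * |p m z - S z|) + (2*ε) * S z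
            + ∑ m, (q m * Real.log (q m)) * (S z - p m z))
          = c * (∫ z, ∑ m, q m * |p m z - S z|) + (2*ε) * 1 + 0 := by
        rw [integral_add hRint12 hRint3, integral_add hRint1 hRint2,
          integral_const_mul, integral_const_mul, hSint1]
        congr 1
        rw [integral_finset_sum _ fun m _ => hRint3m m]
        refine Finset.sum_eq_zero fun m _ => ?_
        rw [integral_const_mul, integral_sub hSint (hpint m), hSint1, hp1 m]
        ring
      rw [hswap]
      calc (∫ z, ∑ m, q m * (p m z * Real.log (p m z / S z)))
          ≤ c * (∫ z, ∑ m, q m * |p m z - S z|) + (2*ε) * 1 + 0 := by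
            rw [← hRcalc]; exact hInt
        _ ≤ c * (2*ε) + 2*ε := by nlinarith [mul_le_mul_of_nonneg_left hTle hc0]
        _ = (Real.log (Fintype.card ι) - Real.log (2*ε) - 1) * (2*ε) + 2*ε := by
            rw [hcdef]
        _ ≤ 8 * ε * ((k:ℝ)*R) - 8 * ε * Real.log (8*ε) := final_arith hN2 hNR hεpos hε8
        _ = 8 * ε * k * R - 8 * ε * Real.log (8*ε) := by ring
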